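/- arXiv:1803.00224 — 2 statements merged into one kernel-verified Lean document; each statement's English description precedes it below -/
import Mathlib

section
/- Let S be a measurable set in a metric measure space and 0 < s, p < ∞. If g is an s-gradient of u on S (i.e. |u(x) − u(y)| ≤ d(x,y)^s (g(x) + g(y)) for a.e. x, y ∈ S), then the constant sequence (g_k)_{k∈ℤ} with g_k = g for all k is a fractional s-gradient of u on S, and consequently the Haj\l asz-Sobolev seminorm inf_{g ∈ D^s(u)} ‖g‖_{L^p(S)} equals the Haj\l asz-Triebel-Lizorkin seminorm with q = ∞: ‖u‖_{Ṁ^s_{p,∞}(S)} = ‖u‖_{Ṁ^{s,p}(S)}. -/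
open MeasureTheory
open scoped ENNReal

/-- `(g k)` is a fractional `s`-gradient of `u` on `S`. -/
def IsFractionalSGradient {X : Type*} [MetricSpace X] [MeasurableSpace X]
    (μ : Measure X) (S : Set X) (s : ℝ) (u : X → ℝ) (g : ℤ → X → ℝ) : Prop :=
  (∀ k x, 0 ≤ g k x) ∧
  ∃ E : Set X, E ⊆ S ∧ μ E = 0 ∧
    ∀ (k : ℤ), ∀ x ∈ S \ E, ∀ y ∈ S \ E,
      2 ^ ((k : ℝ) - 1) ≤ dist x y → dist x y < 2 ^ (k : ℝ) →
      |u x - u y| ≤ dist x y ^ s * (g k x + g k y)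

/-- `g` is an `s`-gradient of `u` on `S`. -/
def IsSGradient {X : Type*} [MetricSpace X] [MeasurableSpace X]
    (μ : Measure X) (S : Set X) (s : ℝ) (u : X → ℝ) (g : X → ℝ) : Prop :=
  (∀ x, 0 ≤ g x) ∧
  ∃ E : Set X, E ⊆ S ∧ μ E = 0 ∧
    ∀ x ∈ S \ E, ∀ y ∈ S \ E, |u x - u y| ≤ dist x y ^ s * (g x + g y)

/-- The homogeneous Hajłasz–Triebel–Lizorkin seminorm with `q = ∞`. -/
noncomputable def TLSeminormInfty {X : Type*} [MetricSpace X] [MeasurableSpace X]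
    (μ : Measure X) (S : Set X) (s p : ℝ) (u : X → ℝ) : ℝ≥0∞ :=
  sInf {A : ℝ≥0∞ | ∃ g : ℤ → X → ℝ, IsFractionalSGradient μ S s u g ∧
    A = (∫⁻ x in S, (⨆ k : ℤ, ENNReal.ofReal (g k x)) ^ p ∂μ) ^ (1 / p)}

/-- The homogeneous Hajłasz–Sobolev seminorm. -/
noncomputable def HajlaszSeminorm {X : Type*} [MetricSpace X] [MeasurableSpace X]
    (μ : Measure X) (S : Set X) (s p : ℝ) (u : X → ℝ) : ℝ≥0∞ :=
  sInf {A : ℝ≥0∞ | ∃ g : X → ℝ, IsSGradient μ S s u g ∧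
    A = (∫⁻ x in S, (ENNReal.ofReal (g x)) ^ p ∂μ) ^ (1 / p)}

lemma aux_scale {d : ℝ} (hd : 0 < d) :
    ∃ k : ℤ, 2 ^ ((k : ℝ) - 1) ≤ d ∧ d < 2 ^ (k : ℝ) := by
  refine ⟨⌊Real.logb 2 d⌋ + 1, ?_, ?_⟩
  · have h1 : ((⌊Real.logb 2 d⌋ + 1 : ℤ) : ℝ) - 1 = (⌊Real.logb 2 d⌋ : ℝ) := by
      push_cast; ring
    rw [h1]
    have h2 : (⌊Real.logb 2 d⌋ : ℝ) ≤ Real.logb 2 d := Int.floor_le _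
    calc (2:ℝ) ^ ((⌊Real.logb 2 d⌋ : ℝ)) ≤ 2 ^ (Real.logb 2 d) :=
          Real.rpow_le_rpow_of_exponent_le one_le_two h2
      _ = d := Real.rpow_logb two_pos (by norm_num) hd
  · have h2 : Real.logb 2 d < ((⌊Real.logb 2 d⌋ + 1 : ℤ) : ℝ) := by
      push_cast
      exact Int.lt_floor_add_one _
    calc d = 2 ^ (Real.logb 2 d) := (Real.rpow_logb two_pos (by norm_num) hd).symm
      _ < 2 ^ (((⌊Real.logb 2 d⌋ + 1 : ℤ) : ℝ)) := Real.rpow_lt_rpow_of_exponent_lt one_lt_two h2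

/-- Key pairwise estimate: if both endpoints have `N`-value dominated by reals `a`, `b`,
then the Hajłasz inequality holds with constants `a + b`. -/
lemma aux_pair {X : Type*} [MetricSpace X]
    {S E : Set X} {s : ℝ} (hs : 0 < s) {u : X → ℝ} {g : ℤ → X → ℝ}
    (hineq : ∀ (k : ℤ), ∀ x ∈ S \ E, ∀ y ∈ S \ E,
      2 ^ ((k : ℝ) - 1) ≤ dist x y → dist x y < 2 ^ (k : ℝ) →
      |u x - u y| ≤ dist x y ^ s * (g k x + g k y))
    {z w : X} (hz : z ∈ S \ E) (hw : w ∈ S \ E)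
    {a b : ℝ} (ha0 : 0 ≤ a) (hb0 : 0 ≤ b)
    (ha : (⨆ k : ℤ, ENNReal.ofReal (g k z)) ≤ ENNReal.ofReal a)
    (hb : (⨆ k : ℤ, ENNReal.ofReal (g k w)) ≤ ENNReal.ofReal b) :
    |u z - u w| ≤ dist z w ^ s * (a + b) := by
  rcases eq_or_ne z w with rfl | hzw
  · simp [Real.zero_rpow hs.ne']
  · have hd : 0 < dist z w := dist_pos.2 hzw
    obtain ⟨k, h1, h2⟩ := aux_scale hd
    have h3 := hineq k z hz w hw h1 h2
    have hga : g k z ≤ a := by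
      have := le_trans (le_iSup (fun k => ENNReal.ofReal (g k z)) k) ha
      rwa [ENNReal.ofReal_le_ofReal_iff ha0] at this
    have hgb : g k w ≤ b := by
      have := le_trans (le_iSup (fun k => ENNReal.ofReal (g k w)) k) hb
      rwa [ENNReal.ofReal_le_ofReal_iff hb0] at this
    calc |u z - u w| ≤ dist z w ^ s * (g k z + g k w) := h3
      _ ≤ dist z w ^ s * (a + b) := by
          apply mul_le_mul_of_nonneg_left (add_le_add hga hgb)
          exact Real.rpow_nonneg dist_nonneg s

/-- The lower-semicontinuous envelope function used to detect "good" points. -/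
noncomputable def auxF {X : Type*} [MetricSpace X] (u : X → ℝ) (H : Set X) (r : ℝ) :
    X → EReal :=
  fun x => ⨆ z : H, if dist x (z : X) < r then ((u z : EReal)) else ⊥

lemma auxF_measurable {X : Type*} [MetricSpace X] [MeasurableSpace X] [BorelSpace X]
    (u : X → ℝ) (H : Set X) (r : ℝ) : Measurable (auxF u H r) := by
  apply measurable_of_Ioi
  intro c
  have : auxF u H r ⁻¹' Set.Ioi c =
      ⋃ z : H, if c < (u z : EReal) then Metric.ball (z : X) r else ∅ := by
    ext x
    simp only [Set.mem_preimage, Set.mem_Ioi, auxF, lt_iSup_iff, Set.mem_iUnion]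
    constructor
    · rintro ⟨z, hz⟩
      refine ⟨z, ?_⟩
      by_cases hd : dist x (z : X) < r
      · rw [if_pos hd] at hz
        rw [if_pos hz]
        exact Metric.mem_ball.2 hd
      · rw [if_neg hd] at hz
        exact absurd hz (not_lt_bot)
    · rintro ⟨z, hz⟩
      by_cases hc : c < (u z : EReal)
      · rw [if_pos hc] at hz
        refine ⟨z, ?_⟩
        rw [if_pos (Metric.mem_ball.1 hz)]
        exact hc
      · rw [if_neg hc] at hz
        exact absurd hz (Set.notMem_empty x)
  rw [this]
  refine (isOpen_iUnion ?_).measurableSet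
  intro z
  by_cases hc : c < (u z : EReal)
  · rw [if_pos hc]; exact Metric.isOpen_ball
  · rw [if_neg hc]; exact isOpen_empty

lemma le_auxF {X : Type*} [MetricSpace X] (u : X → ℝ) (H : Set X) {r : ℝ} (hr : 0 < r)
    {z : X} (hz : z ∈ H) : (u z : EReal) ≤ auxF u H r z := by
  have : (u z : EReal) = (if dist z ((⟨z, hz⟩ : H) : X) < r then ((u z : EReal)) else ⊥) := by
    rw [if_pos]
    simpa [dist_self] using hr
  rw [this]
  exact le_iSup (fun w : H => if dist z (w : X) < r then ((u (w : X) : EReal)) else ⊥) ⟨z, hz⟩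

lemma auxF_le {X : Type*} [MetricSpace X] (u : X → ℝ) (H : Set X) (r : ℝ)
    {x : X} {c : ℝ} (h : ∀ z ∈ H, dist x z < r → u z ≤ c) :
    auxF u H r x ≤ (c : EReal) := by
  apply iSup_le
  rintro ⟨z, hz⟩
  by_cases hd : dist x z < r
  · rw [if_pos hd]
    exact_mod_cast h z hz hd
  · rw [if_neg hd]
    exact bot_le

lemma twin_of_auxF {X : Type*} [MetricSpace X] {u : X → ℝ} {H : Set X} {r : ℝ}
    {x : X} {c e : ℝ} (hc : 0 ≤ c) (he : 0 < e)
    (h1 : (u x : EReal) ≤ auxF u H r x)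
    (h2 : auxF u H r x ≤ ((u x + c : ℝ) : EReal)) :
    ∃ z, z ∈ H ∧ dist x z < r ∧ |u x - u z| ≤ c + e := by
  have hlt : ((u x - e : ℝ) : EReal) < auxF u H r x := by
    apply lt_of_lt_of_le _ h1
    exact_mod_cast (by linarith : u x - e < u x)
  rw [auxF, lt_iSup_iff] at hlt
  obtain ⟨⟨z, hz⟩, hzlt⟩ := hlt
  by_cases hd : dist x z < r
  · rw [if_pos hd] at hzlt
    have hlow : u x - e < u z := by exact_mod_cast hzlt
    have hup : u z ≤ u x + c := by
      have h3 : (u z : EReal) ≤ auxF u H r x := by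
        have : (u z : EReal) = (if dist x ((⟨z, hz⟩ : H) : X) < r then ((u z : EReal)) else ⊥) := by
          rw [if_pos hd]
        rw [this]
        exact le_iSup (fun w : H => if dist x (w : X) < r then ((u (w : X) : EReal)) else ⊥) ⟨z, hz⟩
      have := le_trans h3 h2
      exact_mod_cast this
    refine ⟨z, hz, hd, ?_⟩
    rw [abs_sub_le_iff]
    constructor <;> linarith
  · rw [if_neg hd] at hzlt
    exact absurd hzlt (not_lt_bot)

/-- Choice of a small radius making the two error terms controlled. -/
lemma aux_small {s d C K : ℝ} (hs : 0 < s) (hd : 0 < d) (hK : 0 ≤ K) :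
    ∃ m : ℕ, C * ((1:ℝ)/(m+1)) ^ s ≤ d ^ s ∧
      (d + 2 * ((1:ℝ)/(m+1))) ^ s * K ≤ d ^ s * (K + 1) := by
  have hds : 0 < d ^ s := Real.rpow_pos_of_pos hd s
  have hr : Filter.Tendsto (fun m : ℕ => (1:ℝ)/(m+1)) Filter.atTop (nhds 0) :=
    tendsto_one_div_add_atTop_nhds_zero_nat
  -- first condition eventually
  have h1 : Filter.Tendsto (fun m : ℕ => C * ((1:ℝ)/(m+1)) ^ s) Filter.atTop (nhds 0) := by
    have hcont : ContinuousAt (fun t : ℝ => C * t ^ s) 0 := by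
      have h := (Real.continuousAt_rpow_const 0 s (Or.inr hs.le))
      exact (continuousAt_const.mul h)
    have := hcont.tendsto.comp hr
    simpa [Function.comp_def, Real.zero_rpow hs.ne'] using this
  have h1' : ∀ᶠ m : ℕ in Filter.atTop, C * ((1:ℝ)/(m+1)) ^ s ≤ d ^ s := by
    have := h1.eventually (eventually_le_nhds hds)
    simpa using this
  -- second condition eventually
  have h2 : Filter.Tendsto (fun m : ℕ => (d + 2 * ((1:ℝ)/(m+1))) ^ s * K)
      Filter.atTop (nhds (d ^ s * K)) := by
    have hcont : ContinuousAt (fun t : ℝ => (d + 2 * t) ^ s * K) 0 := by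
      have hbase : ContinuousAt (fun t : ℝ => d + 2 * t) 0 := by fun_prop
      have hne : (fun t : ℝ => d + 2 * t) 0 ≠ 0 ∨ 0 ≤ s := Or.inr hs.le
      exact (hbase.rpow_const hne).mul continuousAt_const
    have := hcont.tendsto.comp hr
    simpa [Function.comp_def] using this
  have h2' : ∀ᶠ m : ℕ in Filter.atTop, (d + 2 * ((1:ℝ)/(m+1))) ^ s * K ≤ d ^ s * (K + 1) := by
    have hlt : d ^ s * K < d ^ s * (K + 1) := by nlinarith
    have := h2.eventually (eventually_le_nhds hlt)
    simpa using this
  obtain ⟨m, hm1, hm2⟩ := (h1'.and h2').exists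
  exact ⟨m, hm1, hm2⟩

/-- The hard direction. -/
lemma aux_key {X : Type*} [MetricSpace X] [MeasurableSpace X] [BorelSpace X]
    (μ : Measure X) (S : Set X) (hS : MeasurableSet S)
    (s p : ℝ) (hs : 0 < s) (hp : 0 < p) (u : X → ℝ) (hu : Measurable u)
    (g : ℤ → X → ℝ)
    (hg0 : ∀ k x, 0 ≤ g k x)
    (E : Set X) (hES : E ⊆ S) (hE0 : μ E = 0)
    (hineq : ∀ (k : ℤ), ∀ x ∈ S \ E, ∀ y ∈ S \ E,
      2 ^ ((k : ℝ) - 1) ≤ dist x y → dist x y < 2 ^ (k : ℝ) →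
      |u x - u y| ≤ dist x y ^ s * (g k x + g k y)) :
    sInf {A : ℝ≥0∞ | ∃ g : X → ℝ,
        ((∀ x, 0 ≤ g x) ∧
          ∃ E : Set X, E ⊆ S ∧ μ E = 0 ∧
            ∀ x ∈ S \ E, ∀ y ∈ S \ E, |u x - u y| ≤ dist x y ^ s * (g x + g y)) ∧
        A = (∫⁻ x in S, (ENNReal.ofReal (g x)) ^ p ∂μ) ^ (1 / p)}
      ≤ (∫⁻ x in S, (⨆ k : ℤ, ENNReal.ofReal (g k x)) ^ p ∂μ) ^ (1 / p) := by
  classical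
  set N : X → ℝ≥0∞ := fun x => ⨆ k : ℤ, ENNReal.ofReal (g k x) with hNdef
  set B : ℝ≥0∞ := ∫⁻ x in S, (N x) ^ p ∂μ with hBdef
  by_cases hB : B = ⊤
  · rw [hB, ENNReal.top_rpow_of_pos (by positivity)]
    exact le_top
  -- Setup: measurable null superset of E inside S
  set E₀ : Set X := (toMeasurable μ E) ∩ S with hE₀def
  have hE₀m : MeasurableSet E₀ := (measurableSet_toMeasurable μ E).inter hS
  have hE₀0 : μ E₀ = 0 := by
    apply le_antisymm _ zero_le
    calc μ E₀ ≤ μ (toMeasurable μ E) := measure_mono Set.inter_subset_left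
      _ = μ E := measure_toMeasurable E
      _ = 0 := hE0
  have hEE₀ : E ⊆ E₀ := fun x hx => ⟨subset_toMeasurable μ E hx, hES hx⟩
  have hE₀S : E₀ ⊆ S := Set.inter_subset_right
  have hSE₀E : S \ E₀ ⊆ S \ E := Set.diff_subset_diff_right hEE₀
  -- level sets
  set H : ℕ → Set X := fun n => {z | z ∈ S \ E₀ ∧ N z ≤ ENNReal.ofReal ((n : ℝ) + 1)}
    with hHdef
  set r : ℕ → ℝ := fun m => (1:ℝ)/(m+1) with hrdef
  have hr0 : ∀ m, 0 < r m := fun m => by positivity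
  set b : ℕ → ℕ → ℝ := fun n m => (2*((n:ℝ)+1)) * (r m) ^ s with hbdef
  have hb0 : ∀ n m, 0 ≤ b n m := fun n m => by
    have := (hr0 m).le
    have : (0:ℝ) ≤ (r m) ^ s := Real.rpow_nonneg this s
    positivity
  -- cluster estimate inside H n
  have hclus : ∀ (n : ℕ) {z w : X}, z ∈ H n → w ∈ H n → ∀ {ρ : ℝ}, 0 ≤ ρ →
      dist z w ≤ ρ → |u z - u w| ≤ (2*((n:ℝ)+1)) * ρ ^ s := by
    intro n z w hz hw ρ hρ hd
    have h1 : |u z - u w| ≤ dist z w ^ s * (((n:ℝ)+1) + ((n:ℝ)+1)) :=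
      aux_pair hs hineq (hSE₀E hz.1) (hSE₀E hw.1) (by positivity) (by positivity) hz.2 hw.2
    have h2 : dist z w ^ s ≤ ρ ^ s := Real.rpow_le_rpow dist_nonneg hd hs.le
    calc |u z - u w| ≤ dist z w ^ s * (((n:ℝ)+1) + ((n:ℝ)+1)) := h1
      _ ≤ ρ ^ s * (((n:ℝ)+1) + ((n:ℝ)+1)) := by
          apply mul_le_mul_of_nonneg_right h2 (by positivity)
      _ = (2*((n:ℝ)+1)) * ρ ^ s := by ring
  set F : ℕ → ℕ → X → EReal := fun n m => auxF u (H n) (r m) with hFdef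
  set GOOD : ℕ → Set X := fun n => {x | x ∈ S \ E₀ ∧ ∀ m : ℕ,
      ((u x : EReal) ≤ F n m x ∧ F n m x ≤ ((u x + b n m : ℝ) : EReal))} with hGOODdef
  -- membership criterion
  have hgood_of_le : ∀ (n : ℕ) (z : X), z ∈ S \ E₀ → N z ≤ ENNReal.ofReal ((n : ℝ) + 1) →
      z ∈ GOOD n := by
    intro n z hz hle
    have hzH : z ∈ H n := ⟨hz, hle⟩
    refine ⟨hz, fun m => ⟨le_auxF u (H n) (hr0 m) hzH, ?_⟩⟩
    apply auxF_le
    intro w hw hd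
    have h1 : |u w - u z| ≤ (2*((n:ℝ)+1)) * (r m) ^ s := by
      apply hclus n hw hzH (hr0 m).le
      rw [dist_comm]
      exact hd.le
    have h2 := abs_le.1 h1
    have : b n m = (2*((n:ℝ)+1)) * (r m) ^ s := rfl
    linarith [h2.2]
  -- twin extraction
  have htwin : ∀ (n : ℕ) (x : X), x ∈ GOOD n → ∀ m : ℕ,
      ∃ z, z ∈ H n ∧ dist x z < r m ∧ |u x - u z| ≤ b n m + (r m) ^ s := by
    intro n x hx m
    have h := hx.2 m
    exact twin_of_auxF (hb0 n m) (Real.rpow_pos_of_pos (hr0 m) s) h.1 h.2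
  -- bad sets
  set BAD : ℕ → Set X := fun n => (S \ E₀) \ GOOD n with hBADdef
  have hGOODm : ∀ n, MeasurableSet (GOOD n) := by
    intro n
    have heq : GOOD n = (S \ E₀) ∩ ⋂ m : ℕ,
        ({x | (u x : EReal) ≤ F n m x} ∩ {x | F n m x ≤ ((u x + b n m : ℝ) : EReal)}) := by
      ext x
      simp only [hGOODdef, Set.mem_setOf_eq, Set.mem_inter_iff, Set.mem_iInter]
    rw [heq]
    apply (hS.diff hE₀m).inter
    apply MeasurableSet.iInter
    intro m
    have hF : Measurable (F n m) := auxF_measurable u (H n) (r m)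
    have hu1 : Measurable (fun x => ((u x : EReal))) := measurable_coe_real_ereal.comp hu
    have hu2 : Measurable (fun x => ((u x + b n m : ℝ) : EReal)) :=
      measurable_coe_real_ereal.comp (hu.add_const _)
    exact (measurableSet_le hu1 hF).inter (measurableSet_le hF hu2)
  have hBADm : ∀ n, MeasurableSet (BAD n) := fun n => (hS.diff hE₀m).diff (hGOODm n)
  have hBADsub : ∀ n, ∀ z ∈ BAD n, ENNReal.ofReal ((n : ℝ) + 1) < N z := by
    intro n z hz
    by_contra hle
    push_neg at hle
    exact hz.2 (hgood_of_le n z hz.1 hle)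
  have hBADmeasure : ∀ n : ℕ, μ (BAD n) * (ENNReal.ofReal ((n : ℝ) + 1)) ^ p ≤ B := by
    intro n
    have hsub : BAD n ⊆ S := fun z hz => hz.1.1
    calc μ (BAD n) * (ENNReal.ofReal ((n : ℝ) + 1)) ^ p
        = ∫⁻ _ in BAD n, (ENNReal.ofReal ((n : ℝ) + 1)) ^ p ∂μ := by
          rw [setLIntegral_const, mul_comm]
      _ ≤ ∫⁻ x in BAD n, (N x) ^ p ∂μ := by
          apply setLIntegral_mono' (hBADm n)
          intro x hx
          exact ENNReal.rpow_le_rpow (hBADsub n x hx).le hp.le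
      _ ≤ ∫⁻ x in S, (N x) ^ p ∂μ := lintegral_mono_set hsub
      _ = B := rfl
  set Z : Set X := ⋂ n, BAD n with hZdef
  have hZsub : ∀ n, μ Z ≤ μ (BAD n) := fun n => measure_mono (Set.iInter_subset _ n)
  have hZB : ∀ n : ℕ, μ Z * (ENNReal.ofReal ((n : ℝ) + 1)) ^ p ≤ B := fun n =>
    le_trans (mul_le_mul_left (hZsub n) _) (hBADmeasure n)
  have hZ0 : μ Z = 0 := by
    by_contra hc
    have hZtop : μ Z ≠ ⊤ := by
      intro htop
      have h0 := hZB 0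
      rw [htop] at h0
      have h1 : (ENNReal.ofReal (((0:ℕ) : ℝ) + 1)) ^ p = 1 := by
        norm_num
      rw [h1, mul_one] at h0
      exact hB (top_le_iff.1 h0)
    have hdivne : B / μ Z ≠ ⊤ := (ENNReal.div_lt_top hB hc).ne
    have hxne : (B / μ Z) ^ (1/p) ≠ ⊤ :=
      (ENNReal.rpow_lt_top_of_nonneg (by positivity) hdivne).ne
    obtain ⟨n, hn⟩ := ENNReal.exists_nat_gt hxne
    have hn' : (B / μ Z) ^ (1/p) < ENNReal.ofReal ((n : ℝ) + 1) := by
      apply lt_of_lt_of_le hn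
      rw [← ENNReal.ofReal_natCast n]
      exact ENNReal.ofReal_le_ofReal (by linarith)
    have hlt : B / μ Z < (ENNReal.ofReal ((n : ℝ) + 1)) ^ p := by
      have := ENNReal.rpow_lt_rpow hn' hp
      rwa [← ENNReal.rpow_mul, one_div, inv_mul_cancel₀ hp.ne', ENNReal.rpow_one] at this
    have hlt2 : B < (ENNReal.ofReal ((n : ℝ) + 1)) ^ p * μ Z :=
      (ENNReal.div_lt_iff (Or.inl hc) (Or.inl hZtop)).1 hlt
    rw [mul_comm] at hlt2
    exact absurd (hZB n) (not_le.2 hlt2)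
  set E' : Set X := E₀ ∪ Z with hE'def
  have hE'S : E' ⊆ S := by
    apply Set.union_subset hE₀S
    intro z hz
    have := Set.mem_iInter.1 hz 0
    exact this.1.1
  have hE'0 : μ E' = 0 := by
    apply le_antisymm _ zero_le
    calc μ E' ≤ μ E₀ + μ Z := measure_union_le _ _
      _ = 0 := by rw [hE₀0, hZ0, add_zero]
  have hgoodx : ∀ x ∈ S \ E', ∃ n, x ∈ GOOD n := by
    intro x hx
    have hx1 : x ∈ S \ E₀ := ⟨hx.1, fun h => hx.2 (Set.mem_union_left _ h)⟩
    have hx2 : x ∉ Z := fun h => hx.2 (Set.mem_union_right _ h)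
    rw [hZdef, Set.mem_iInter] at hx2
    push_neg at hx2
    obtain ⟨n, hn⟩ := hx2
    rw [hBADdef] at hn
    simp only [Set.mem_diff, not_and, not_not] at hn
    exact ⟨n, hn hx1⟩
  -- main pairwise estimates
  have hP3 : ∀ (n : ℕ) (x : X), x ∈ GOOD n → ∀ y ∈ S \ E, y ≠ x → N y ≠ ⊤ →
      |u x - u y| ≤ dist x y ^ s * ((N y).toReal + ((n:ℝ) + 3)) := by
    intro n x hx y hy hyx hNy
    have hν0 : 0 ≤ (N y).toReal := ENNReal.toReal_nonneg
    have hd : 0 < dist x y := dist_pos.2 (Ne.symm hyx)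
    have hds : 0 < dist x y ^ s := Real.rpow_pos_of_pos hd s
    obtain ⟨m, hm1, hm2⟩ := aux_small (C := 2*((n:ℝ)+1) + 1)
      (K := ((n:ℝ)+1) + (N y).toReal) hs hd (by positivity)
    have hrm : (1:ℝ)/((m:ℝ)+1) = r m := by rw [hrdef]
    rw [hrm] at hm1 hm2
    obtain ⟨z, hzH, hzd, hzu⟩ := htwin n x hx m
    have htw : |u x - u z| ≤ dist x y ^ s := by
      calc |u x - u z| ≤ b n m + (r m) ^ s := hzu
        _ = (2*((n:ℝ)+1) + 1) * (r m) ^ s := by rw [hbdef]; ring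
        _ ≤ dist x y ^ s := hm1
    by_cases hzy : z = y
    · subst hzy
      calc |u x - u z| ≤ dist x z ^ s := htw
        _ = dist x z ^ s * 1 := (mul_one _).symm
        _ ≤ dist x z ^ s * ((N z).toReal + ((n:ℝ) + 3)) := by
            apply mul_le_mul_of_nonneg_left _ hds.le
            linarith
    · have hpair : |u z - u y| ≤ dist z y ^ s * (((n:ℝ)+1) + (N y).toReal) := by
        apply aux_pair hs hineq (hSE₀E hzH.1) hy (by positivity) hν0 hzH.2
        rw [ENNReal.ofReal_toReal hNy]
      have hdzy : dist z y ≤ dist x y + 2 * (r m) := by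
        have h1 : dist z y ≤ dist z x + dist x y := dist_triangle z x y
        have h2 : dist z x = dist x z := dist_comm z x
        have := (hr0 m)
        nlinarith [hzd]
      have hd2 : dist z y ^ s ≤ (dist x y + 2 * (r m)) ^ s :=
        Real.rpow_le_rpow dist_nonneg hdzy hs.le
      have hmid : |u z - u y| ≤ dist x y ^ s * ((((n:ℝ)+1) + (N y).toReal) + 1) := by
        calc |u z - u y| ≤ dist z y ^ s * (((n:ℝ)+1) + (N y).toReal) := hpair
          _ ≤ (dist x y + 2 * (r m)) ^ s * (((n:ℝ)+1) + (N y).toReal) := by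
              apply mul_le_mul_of_nonneg_right hd2 (by positivity)
          _ ≤ dist x y ^ s * ((((n:ℝ)+1) + (N y).toReal) + 1) := hm2
      calc |u x - u y| ≤ |u x - u z| + |u z - u y| := abs_sub_le _ _ _
        _ ≤ dist x y ^ s + dist x y ^ s * ((((n:ℝ)+1) + (N y).toReal) + 1) := by
            exact add_le_add htw hmid
        _ = dist x y ^ s * ((N y).toReal + ((n:ℝ) + 3)) := by ring
  have hP4 : ∀ (n n' : ℕ) (x y : X), x ∈ GOOD n → y ∈ GOOD n' → y ≠ x →
      |u x - u y| ≤ dist x y ^ s * ((((n:ℝ)+1) + ((n':ℝ)+1)) + 3) := by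
    intro n n' x y hx hy hyx
    have hd : 0 < dist x y := dist_pos.2 (Ne.symm hyx)
    have hds : 0 < dist x y ^ s := Real.rpow_pos_of_pos hd s
    obtain ⟨m, hm1, hm2⟩ := aux_small (C := 2*(((n:ℝ)+1) + ((n':ℝ)+1)) + 1)
      (K := ((n:ℝ)+1) + ((n':ℝ)+1)) hs hd (by positivity)
    have hrm : (1:ℝ)/((m:ℝ)+1) = r m := by rw [hrdef]
    rw [hrm] at hm1 hm2
    have hrs0 : (0:ℝ) ≤ (r m) ^ s := Real.rpow_nonneg (hr0 m).le s
    obtain ⟨z, hzH, hzd, hzu⟩ := htwin n x hx m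
    obtain ⟨w, hwH, hwd, hwu⟩ := htwin n' y hy m
    have htwx : |u x - u z| ≤ dist x y ^ s := by
      calc |u x - u z| ≤ b n m + (r m) ^ s := hzu
        _ = (2*((n:ℝ)+1) + 1) * (r m) ^ s := by rw [hbdef]; ring
        _ ≤ (2*(((n:ℝ)+1) + ((n':ℝ)+1)) + 1) * (r m) ^ s := by nlinarith
        _ ≤ dist x y ^ s := hm1
    have htwy : |u y - u w| ≤ dist x y ^ s := by
      calc |u y - u w| ≤ b n' m + (r m) ^ s := hwu
        _ = (2*((n':ℝ)+1) + 1) * (r m) ^ s := by rw [hbdef]; ring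
        _ ≤ (2*(((n:ℝ)+1) + ((n':ℝ)+1)) + 1) * (r m) ^ s := by nlinarith
        _ ≤ dist x y ^ s := hm1
    have hmid : |u z - u w| ≤ dist x y ^ s * ((((n:ℝ)+1) + ((n':ℝ)+1)) + 1) := by
      by_cases hzw : z = w
      · subst hzw
        simp only [sub_self, abs_zero]
        positivity
      · have hpair : |u z - u w| ≤ dist z w ^ s * (((n:ℝ)+1) + ((n':ℝ)+1)) :=
          aux_pair hs hineq (hSE₀E hzH.1) (hSE₀E hwH.1) (by positivity) (by positivity)
            hzH.2 hwH.2
        have hdzw : dist z w ≤ dist x y + 2 * (r m) := by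
          have h1 : dist z w ≤ dist z x + dist x w := dist_triangle z x w
          have h2 : dist x w ≤ dist x y + dist y w := dist_triangle x y w
          have h3 : dist z x = dist x z := dist_comm z x
          have h4 : dist y w = dist y w := rfl
          nlinarith [hzd, hwd]
        have hd2 : dist z w ^ s ≤ (dist x y + 2 * (r m)) ^ s :=
          Real.rpow_le_rpow dist_nonneg hdzw hs.le
        calc |u z - u w| ≤ dist z w ^ s * (((n:ℝ)+1) + ((n':ℝ)+1)) := hpair
          _ ≤ (dist x y + 2 * (r m)) ^ s * (((n:ℝ)+1) + ((n':ℝ)+1)) := by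
              apply mul_le_mul_of_nonneg_right hd2 (by positivity)
          _ ≤ dist x y ^ s * ((((n:ℝ)+1) + ((n':ℝ)+1)) + 1) := hm2
    calc |u x - u y| ≤ |u x - u z| + |u z - u y| := abs_sub_le _ _ _
      _ ≤ |u x - u z| + (|u z - u w| + |u w - u y|) := by
          exact add_le_add le_rfl (abs_sub_le _ _ _)
      _ = |u x - u z| + |u z - u w| + |u y - u w| := by rw [abs_sub_comm (u w) (u y)]; ring
      _ ≤ dist x y ^ s + dist x y ^ s * ((((n:ℝ)+1) + ((n':ℝ)+1)) + 1) + dist x y ^ s := by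
          exact add_le_add (add_le_add htwx hmid) htwy
      _ = dist x y ^ s * ((((n:ℝ)+1) + ((n':ℝ)+1)) + 3) := by ring
  -- the gradient
  set lev : ∀ x, x ∈ S \ E' → ℕ := fun x hx => (hgoodx x hx).choose with hlevdef
  set G : X → ℝ := fun x => if hx : x ∈ S \ E' then
      (if N x = ⊤ then ((lev x hx : ℝ) + 4) else (N x).toReal) else 0 with hGdef
  have hG0 : ∀ x, 0 ≤ G x := by
    intro x
    simp only [hGdef]
    by_cases hx : x ∈ S \ E'
    · rw [dif_pos hx]
      by_cases hNx : N x = ⊤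
      · rw [if_pos hNx]; positivity
      · rw [if_neg hNx]; exact ENNReal.toReal_nonneg
    · rw [dif_neg hx]
  have hSE'E : S \ E' ⊆ S \ E := by
    apply Set.diff_subset_diff_right
    intro z hz
    exact Set.mem_union_left _ (hEE₀ hz)
  have hlevgood : ∀ (x : X) (hx : x ∈ S \ E'), x ∈ GOOD (lev x hx) := by
    intro x hx
    rw [hlevdef]
    exact (hgoodx x hx).choose_spec
  have hGgrad : ∀ x ∈ S \ E', ∀ y ∈ S \ E', |u x - u y| ≤ dist x y ^ s * (G x + G y) := by
    intro x hx y hy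
    have hGx_top : N x = ⊤ → G x = ((lev x hx : ℝ) + 4) := fun h => by
      simp only [hGdef]; rw [dif_pos hx, if_pos h]
    have hGx_fin : N x ≠ ⊤ → G x = (N x).toReal := fun h => by
      simp only [hGdef]; rw [dif_pos hx, if_neg h]
    have hGy_top : N y = ⊤ → G y = ((lev y hy : ℝ) + 4) := fun h => by
      simp only [hGdef]; rw [dif_pos hy, if_pos h]
    have hGy_fin : N y ≠ ⊤ → G y = (N y).toReal := fun h => by
      simp only [hGdef]; rw [dif_pos hy, if_neg h]
    rcases eq_or_ne x y with rfl | hxy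
    · simp [Real.zero_rpow hs.ne', mul_nonneg, hG0]
    · have hds : (0:ℝ) ≤ dist x y ^ s := Real.rpow_nonneg dist_nonneg s
      by_cases hNx : N x = ⊤
      · by_cases hNy : N y = ⊤
        · -- both infinite
          rw [hGx_top hNx, hGy_top hNy]
          have h := hP4 (lev x hx) (lev y hy) x y (hlevgood x hx) (hlevgood y hy) hxy.symm
          calc |u x - u y|
              ≤ dist x y ^ s * ((((lev x hx : ℝ)+1) + ((lev y hy : ℝ)+1)) + 3) := h
            _ ≤ dist x y ^ s * (((lev x hx : ℝ) + 4) + ((lev y hy : ℝ) + 4)) := by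
                apply mul_le_mul_of_nonneg_left _ hds
                linarith
        · -- x infinite, y finite
          rw [hGx_top hNx, hGy_fin hNy]
          have h := hP3 (lev x hx) x (hlevgood x hx) y (hSE'E hy) hxy.symm hNy
          calc |u x - u y|
              ≤ dist x y ^ s * ((N y).toReal + ((lev x hx : ℝ) + 3)) := h
            _ ≤ dist x y ^ s * (((lev x hx : ℝ) + 4) + (N y).toReal) := by
                apply mul_le_mul_of_nonneg_left _ hds
                linarith
      · by_cases hNy : N y = ⊤
        · -- x finite, y infinite
          rw [hGx_fin hNx, hGy_top hNy]
          have h := hP3 (lev y hy) y (hlevgood y hy) x (hSE'E hx) hxy hNx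
          rw [abs_sub_comm (u x) (u y), dist_comm x y]
          calc |u y - u x|
              ≤ dist y x ^ s * ((N x).toReal + ((lev y hy : ℝ) + 3)) := h
            _ ≤ dist y x ^ s * ((N x).toReal + ((lev y hy : ℝ) + 4)) := by
                apply mul_le_mul_of_nonneg_left _ (Real.rpow_nonneg dist_nonneg s)
                linarith
        · -- both finite
          rw [hGx_fin hNx, hGy_fin hNy]
          apply aux_pair hs hineq (hSE'E hx) (hSE'E hy)
            ENNReal.toReal_nonneg ENNReal.toReal_nonneg
          · rw [ENNReal.ofReal_toReal hNx]
          · rw [ENNReal.ofReal_toReal hNy]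
  have hGval : (∫⁻ x in S, (ENNReal.ofReal (G x)) ^ p ∂μ) ≤ B := by
    apply lintegral_mono
    intro x
    show ENNReal.ofReal (G x) ^ p ≤ N x ^ p
    by_cases hx : x ∈ S \ E'
    · by_cases hNx : N x = ⊤
      · rw [hNx, ENNReal.top_rpow_of_pos hp]
        exact le_top
      · simp only [hGdef]
        rw [dif_pos hx, if_neg hNx, ENNReal.ofReal_toReal hNx]
    · simp only [hGdef]
      rw [dif_neg hx, ENNReal.ofReal_zero, ENNReal.zero_rpow_of_pos hp]
      exact zero_le
  -- conclude
  have hmem : ((∫⁻ x in S, (ENNReal.ofReal (G x)) ^ p ∂μ) ^ (1/p)) ∈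
      {A : ℝ≥0∞ | ∃ g : X → ℝ,
        ((∀ x, 0 ≤ g x) ∧
          ∃ E : Set X, E ⊆ S ∧ μ E = 0 ∧
            ∀ x ∈ S \ E, ∀ y ∈ S \ E, |u x - u y| ≤ dist x y ^ s * (g x + g y)) ∧
        A = (∫⁻ x in S, (ENNReal.ofReal (g x)) ^ p ∂μ) ^ (1 / p)} :=
    ⟨G, ⟨hG0, E', hE'S, hE'0, hGgrad⟩, rfl⟩
  calc sInf _ ≤ (∫⁻ x in S, (ENNReal.ofReal (G x)) ^ p ∂μ) ^ (1/p) := sInf_le hmem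
    _ ≤ B ^ (1/p) := ENNReal.rpow_le_rpow hGval (by positivity)

/-- An `s`-gradient gives a fractional `s`-gradient as a constant sequence, and the
Hajłasz–Sobolev seminorm coincides with the Triebel–Lizorkin seminorm with `q = ∞`. -/
theorem hajlasz_eq_triebelLizorkin_infty
    {X : Type*} [MetricSpace X] [MeasurableSpace X] [BorelSpace X]
    (μ : Measure X) (S : Set X) (hS : MeasurableSet S)
    (s p : ℝ) (hs : 0 < s) (hp : 0 < p) (u : X → ℝ) (hu : Measurable u) :
    (∀ g : X → ℝ, IsSGradient μ S s u g →
      IsFractionalSGradient μ S s u (fun _ => g)) ∧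
    TLSeminormInfty μ S s p u = HajlaszSeminorm μ S s p u := by
  constructor
  · rintro g ⟨hg0, E, hES, hE0, hineq⟩
    exact ⟨fun _ x => hg0 x, E, hES, hE0, fun k x hx y hy _ _ => hineq x hx y hy⟩
  · apply le_antisymm
    · refine sInf_le_sInf ?_
      rintro A ⟨g, hg, rfl⟩
      refine ⟨fun _ => g, ?_, by simp⟩
      obtain ⟨hg0, E, hES, hE0, hineq⟩ := hg
      exact ⟨fun _ x => hg0 x, E, hES, hE0, fun k x hx y hy _ _ => hineq x hx y hy⟩
    · refine le_sInf ?_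
      rintro A ⟨g, hg, rfl⟩
      obtain ⟨hg0, E, hES, hE0, hineq⟩ := hg
      exact aux_key μ S hS s p hs hp u hu g hg0 E hES hE0 hineq
end

section
/- Let (X,d,μ) be a metric measure space, Ω a measurable set, and suppose the Morrey-type embedding holds for exponents 0 < s < 1, sp > Q: every f in the unit ball of M^s_{p,q}(Ω) satisfies |f(y) − f(z)| ≤ C₃ d(y,z)^{s−Q/p} for a.e. y, z ∈ Ω. Fix x ∈ Ω and r ∈ (0,1], and let u be the cut-off at scales r̃ ≤ r/4 < r as above, with ‖u‖_{M^s_{p,q}(Ω)} ≤ C μ(B(x,r) ∩ Ω)^{1/p} r^{−s}. If there exist points y ∈ B(x, r/4) ∩ Ω with u(y) = 1 and z ∈ (B(x, 3r/2) \ B(x,r)) ∩ Ω with u(z) = 0, then μ(B(x,r) ∩ Ω) ≥ c r^Q, where c depends only on C, C₃, s, p, Q. -/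
open Metric MeasureTheory

/-- Case `sp > Q` of the measure-density theorem: testing the Morrey embedding
against the annular cut-off `u` (with norm `N ≤ C μ(B(x,r)∩Ω)^{1/p} r^{−s}`)
at points `y, z` with `u y = 1`, `u z = 0` yields `μ(B(x,r)∩Ω) ≥ c r^Q`. -/
theorem measure_density_from_cutoff_test
    (C C₃ s p Q : ℝ) (hC : 0 < C) (hC₃ : 0 < C₃)
    (hs0 : 0 < s) (hs1 : s < 1) (hp : 0 < p) (hQ : 0 < Q) (hspQ : Q < s * p) :
    ∃ c : ℝ, 0 < c ∧
      ∀ (X : Type) [inst : MetricSpace X] [instm : MeasurableSpace X]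
        [instb : BorelSpace X] (μ : Measure X) (Ω : Set X)
        (u : X → ℝ) (N : ℝ) (x : X) (r : ℝ) (y z : X),
        0 < r → r ≤ 1 → x ∈ Ω →
        0 ≤ N →
        N ≤ C * (μ (ball x r ∩ Ω)).toReal ^ (1 / p) * r ^ (-s) →
        (∀ y' ∈ Ω, ∀ z' ∈ Ω,
          |u y' - u z'| ≤ C₃ * N * dist y' z' ^ (s - Q / p)) →
        y ∈ ball x (r / 4) ∩ Ω → u y = 1 →
        z ∈ (ball x (3 * r / 2) \ ball x r) ∩ Ω → u z = 0 →
        ENNReal.ofReal (c * r ^ Q) ≤ μ (ball x r ∩ Ω) := by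
  have hα : 0 < s - Q / p := by
    rw [sub_pos, div_lt_iff₀ hp]; linarith
  set α := s - Q / p with hαdef
  have hK0 : (0:ℝ) < C * C₃ * 2 ^ α := by positivity
  refine ⟨(C * C₃ * 2 ^ α) ^ (-p), Real.rpow_pos_of_pos hK0 _, ?_⟩
  intro X _ _ _ μ Ω u N x r y z hr0 hr1 hxΩ hN0 hN hMorrey hy hu1 hz hu0
  set K := C * C₃ * 2 ^ α with hKdef
  set M := (μ (ball x r ∩ Ω)).toReal with hMdef
  have hM0 : 0 ≤ M := ENNReal.toReal_nonneg
  have hd : dist y z ≤ 2 * r := by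
    have h1 : dist y x < r / 4 := mem_ball.mp hy.1
    have h2 : dist x z < 3 * r / 2 := by
      have := mem_ball.mp hz.1.1; rw [dist_comm]; exact this
    calc dist y z ≤ dist y x + dist x z := dist_triangle _ _ _
    _ ≤ 2 * r := by linarith
  have h1 : (1:ℝ) ≤ C₃ * N * dist y z ^ α := by
    have := hMorrey y hy.2 z hz.2
    rw [hu1, hu0] at this; simpa using this
  have h2 : C₃ * N * dist y z ^ α ≤ C₃ * N * (2 * r) ^ α :=
    mul_le_mul_of_nonneg_left (Real.rpow_le_rpow dist_nonneg hd hα.le)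
      (by positivity)
  have h3 : C₃ * N * (2 * r) ^ α ≤ C₃ * (C * M ^ (1 / p) * r ^ (-s)) * (2 * r) ^ α :=
    mul_le_mul_of_nonneg_right (mul_le_mul_of_nonneg_left hN hC₃.le)
      (by positivity)
  have key : (1:ℝ) ≤ K * M ^ (1 / p) * r ^ (-(Q / p)) := by
    have e1 : (2 * r) ^ α = 2 ^ α * r ^ α := Real.mul_rpow (by norm_num) hr0.le
    have e2 : r ^ (-s) * r ^ α = r ^ (-(Q / p)) := by
      rw [← Real.rpow_add hr0, hαdef]; ring_nf
    calc (1:ℝ) ≤ C₃ * (C * M ^ (1 / p) * r ^ (-s)) * (2 * r) ^ α :=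
          le_trans h1 (le_trans h2 h3)
    _ = K * M ^ (1 / p) * (r ^ (-s) * r ^ α) := by rw [e1, hKdef]; ring
    _ = _ := by rw [e2]
  have hrp : (0:ℝ) < r ^ (Q / p) := Real.rpow_pos_of_pos hr0 _
  have key2 : r ^ (Q / p) ≤ K * M ^ (1 / p) := by
    have h := mul_le_mul_of_nonneg_right key hrp.le
    rw [one_mul, mul_assoc, ← Real.rpow_add hr0, neg_add_cancel, Real.rpow_zero,
      mul_one] at h
    exact h
  have key3 : r ^ (Q / p) / K ≤ M ^ (1 / p) := by
    rw [div_le_iff₀ hK0]; linarith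
  have final : K ^ (-p) * r ^ Q ≤ M := by
    have hb : (0:ℝ) ≤ r ^ (Q / p) / K := by positivity
    have h := Real.rpow_le_rpow hb key3 hp.le
    rw [Real.div_rpow hrp.le hK0.le, ← Real.rpow_mul hr0.le, ← Real.rpow_mul hM0,
      div_mul_cancel₀ Q hp.ne', one_div_mul_cancel hp.ne', Real.rpow_one] at h
    rw [Real.rpow_neg hK0.le]
    rwa [inv_mul_eq_div]
  refine ENNReal.ofReal_le_of_le_toReal final
end
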